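/- Nef-partition Cayley cone structure: let Σ̄ be the complete simplicial fan from a coherent triangulation of a reflexive polytope Δ ⊂ ℝ^d with ray generators v̄_1,…,v̄_n, and let L = l_1 + ⋯ + l_r be a nef-partition with associated partition {1,…,n} = E_1 ∪ ⋯ ∪ E_r. Define v_i = (v̄_i, e_j) ∈ ℤ^{d+r} for i ∈ E_j and v_{n+j} = (0, e_j). Then the collection of cones generated by {v_{n+1},…,v_{n+r}} ∪ {v_i : v̄_i ∈ σ}, over maximal cones σ ∈ Σ̄, together with their faces, forms a simplicial fan Σ subdividing the cone C_{Δ̃} over the Cayley polytope Δ̃ = Δ_1 * ⋯ * Δ_r, and the projection q: ℝ^{d+r} → ℝ^d maps Σ onto Σ̄, with each maximal cone of Σ equal to the product of a maximal cone of Σ̄ with the simplicial cone on v_{n+1},…,v_{n+r}. -/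

import Mathlib

open Finset

namespace TRMC

variable {ι : Type*} [Fintype ι] [DecidableEq ι] {D : ℕ}

/-- The conic (ℚ≥0) hull of the vectors indexed by `S`. -/
def coneOf (v : ι → Fin D → ℤ) (S : Finset ι) : Set (Fin D → ℚ) :=
  {x | ∃ c : ι → ℚ, (∀ i, 0 ≤ c i) ∧ (∀ i ∉ S, c i = 0) ∧
    x = ∑ i, c i • fun j => (v i j : ℚ)}

/-- The real conic hull of the vectors indexed by `S`. -/
def coneOfR (v : ι → Fin D → ℤ) (S : Finset ι) : Set (Fin D → ℝ) :=
  {x | ∃ c : ι → ℝ, (∀ i, 0 ≤ c i) ∧ (∀ i ∉ S, c i = 0) ∧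
    x = ∑ i, c i • fun j => (v i j : ℝ)}

/-- Normalized volume of the parallelotype spanned by a `D`-element family of
rational vectors (`1` as junk value if `S.card ≠ D`). -/
noncomputable def volc (v : ι → Fin D → ℚ) (S : Finset ι) : ℚ :=
  if h : S.card = D then
    |Matrix.det (Matrix.of fun a b : Fin D =>
      v (((finCongr h.symm).trans S.equivFin.symm) a) b)|
  else 1

/-- Normalized volume (lattice index) of the simplicial cone generated by
`{v i : i ∈ S}` (junk value `1` if `S.card ≠ D`). -/
noncomputable def vol (v : ι → Fin D → ℤ) (S : Finset ι) : ℚ :=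
  volc (fun i j => (v i j : ℚ)) S

/-- A (finite, rational, simplicial) fan description: the data of the primitive ray
generators and of the maximal cones, each simplicial, pairwise intersecting in faces. -/
structure SimplicialFan (ι : Type*) [Fintype ι] [DecidableEq ι] (D : ℕ) where
  v : ι → Fin D → ℤ
  maxCones : Finset (Finset ι)
  card_eq : ∀ σ ∈ maxCones, σ.card = D
  indep : ∀ σ ∈ maxCones, LinearIndependent ℚ fun i : σ => fun j => ((v i j : ℚ))
  inter_face : ∀ σ ∈ maxCones, ∀ τ ∈ maxCones,
    coneOf v σ ∩ coneOf v τ = coneOf v (σ ∩ τ)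

/-- The fan is complete: its cones cover the whole space. -/
def IsComplete (F : SimplicialFan ι D) : Prop :=
  ∀ x : Fin D → ℚ, ∃ σ ∈ F.maxCones, x ∈ coneOf F.v σ

/-- The space of rational linear relations among the vectors `v i`. -/
def relSpace (v : ι → Fin D → ℤ) : Submodule ℚ (ι → ℚ) where
  carrier := {x | ∑ i, x i • (fun j => (v i j : ℚ)) = 0}
  add_mem' := by
    intro a b ha hb
    simp only [Set.mem_setOf_eq] at *
    simp only [Pi.add_apply, add_smul, Finset.sum_add_distrib, ha, hb, add_zero]
  zero_mem' := by simp
  smul_mem' := by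
    intro c x hx
    simp only [Set.mem_setOf_eq] at *
    simp only [Pi.smul_apply, smul_assoc, ← Finset.smul_sum, hx, smul_zero]

/-- The restriction to `relSpace v` of the `i`-th coordinate function;
these are the images of the dual basis vectors `eᵢ*` in `R(Σ)*`. -/
def coordDual (v : ι → Fin D → ℤ) (i : ι) : Module.Dual ℚ (relSpace v) :=
  (LinearMap.proj i).comp (relSpace v).subtype

/-- The locus in `relSpace v` where all coordinates are nonzero (where all the
Laurent monomials are regular). -/
def Udom (v : ι → Fin D → ℤ) : Set (relSpace v) :=
  {x | ∀ i, (x : ι → ℚ) i ≠ 0}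

/-- The Laurent monomial `x^m`, as a rational function on `relSpace v`. -/
noncomputable def mono (v : ι → Fin D → ℤ) (m : ι → ℤ) : Udom v → ℚ :=
  fun x => ∏ i, ((x : relSpace v) : ι → ℚ) i ^ (m i)

/-- A linear functional having the defining properties of the Jeffrey–Kirwan residue
of the (complete simplicial) fan `F`: it kills degenerate fractions of degree
`-(card ι - D)` and takes the prescribed values on basic fractions. -/
structure JKData (F : SimplicialFan ι D) where
  JK : (Udom F.v → ℚ) →ₗ[ℚ] ℚ
  basic : ∀ I : Finset ι,
    LinearIndependent ℚ (fun i : I => coordDual F.v i) →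
    Submodule.span ℚ (Set.range fun i : I => coordDual F.v i) = ⊤ →
    JK (mono F.v fun i => if i ∈ I then -1 else 0) =
      if Iᶜ ∈ F.maxCones then (vol F.v Iᶜ)⁻¹ else 0
  degen : ∀ m : ι → ℤ, (∀ i, m i ≤ 0) →
    ((∑ i, m i) = -((Fintype.card ι : ℤ) - D)) →
    Submodule.span ℚ (Set.range fun i : {i // m i < 0} => coordDual F.v (i : ι)) ≠ ⊤ →
    JK (mono F.v m) = 0

/-- `ℓ` is the vertex-value vector of a convex conewise linear function on the
subfan with maximal cones `C`, relative to the rays indexed by `A`. -/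
def ConvexPL (v : ι → Fin D → ℤ) (C : Finset (Finset ι)) (A : Finset ι) (ℓ : ι → ℚ) : Prop :=
  ∀ σ ∈ C, ∃ w : (Fin D → ℚ) →ₗ[ℚ] ℚ,
    (∀ i ∈ σ, w (fun j => (v i j : ℚ)) = ℓ i) ∧ ∀ i ∈ A, w (fun j => (v i j : ℚ)) ≤ ℓ i

/-- Strictly convex (ample) conewise linear function on the subfan with maximal
cones `C`, relative to the rays indexed by `A`. -/
def StrictConvexPL (v : ι → Fin D → ℤ) (C : Finset (Finset ι)) (A : Finset ι) (ℓ : ι → ℚ) : Prop :=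
  ∀ σ ∈ C, ∃ w : (Fin D → ℚ) →ₗ[ℚ] ℚ,
    (∀ i ∈ σ, w (fun j => (v i j : ℚ)) = ℓ i) ∧
    (∀ i ∈ A, w (fun j => (v i j : ℚ)) ≤ ℓ i) ∧
    ∀ i ∈ A, i ∉ σ → w (fun j => (v i j : ℚ)) < ℓ i

/-- `β` lies in the Mori cone: it pairs nonnegatively with every convex conewise
linear function of the (sub)fan. -/
def EffOn (v : ι → Fin D → ℤ) (C : Finset (Finset ι)) (A : Finset ι) (β : ι → ℤ) : Prop :=
  ∀ ℓ : ι → ℚ, ConvexPL v C A ℓ → 0 ≤ ∑ i ∈ A, ℓ i * (β i)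

/-- The integral linear map `ℤ^ι → ℤ^D` sending `eᵢ ↦ vᵢ`. -/
def intSpan (v : ι → Fin D → ℤ) : (ι → ℤ) →ₗ[ℤ] (Fin D → ℤ) where
  toFun x := ∑ i, x i • v i
  map_add' := by
    intro a b
    simp only [Pi.add_apply, add_smul, Finset.sum_add_distrib]
  map_smul' := by
    intro c x
    simp only [Pi.smul_apply, smul_assoc, ← Finset.smul_sum, RingHom.id_apply]


/-- Nef-partition Cayley cone structure.  `Σ̄` is the complete
simplicial fan of a coherent triangulation of a reflexive polytope `Δ ⊂ ℝ^d`, with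
nef-partition `L = l₁ + ⋯ + l_r` given by the vertex values `y j i ∈ {0,1}`
(`∑_j y j i = 1`, each `l_j` convex and nonzero), `E_j = {i : y j i = 1}`, and
`grp i` the index `j` with `i ∈ E_j`.  With `vᵢ = (v̄ᵢ, e_{grp i})` and
`v_{n+j} = (0, e_j)` in `ℤ^{d+r}`, the cones generated by
`{v_{n+1},…,v_{n+r}} ∪ {vᵢ : v̄ᵢ ∈ σ}` over maximal `σ ∈ Σ̄` form a simplicial fan
`Σ` subdividing the cone `C_Δ̃` over the Cayley polytope, and the projection
`q : ℝ^{d+r} → ℝ^d` maps each maximal cone of `Σ` onto the corresponding maximal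
cone of `Σ̄`. -/
private lemma sum_of_support {ι M : Type*} [Fintype ι] [DecidableEq ι] [AddCommGroup M]
    [Module ℚ M] (S : Finset ι) (c : ι → ℚ) (f : ι → M) (h : ∀ i ∉ S, c i = 0) :
    ∑ i : S, c (i : ι) • f (i : ι) = ∑ i, c i • f i := by
  rw [Finset.sum_coe_sort S (fun i => c i • f i)]
  exact Finset.sum_subset (Finset.subset_univ S)
    (fun i _ hi => by rw [h i hi, zero_smul])

private lemma indep_unique {n : ℕ} {M : Type*} [AddCommGroup M] [Module ℚ M]
    (w : Fin n → M) (S : Finset (Fin n))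
    (hind : LinearIndependent ℚ fun i : S => w i)
    (c e : Fin n → ℚ) (hc : ∀ i ∉ S, c i = 0) (he : ∀ i ∉ S, e i = 0)
    (h : ∑ i, c i • w i = ∑ i, e i • w i) : c = e := by
  have h0 : ∑ i : S, (c (i : Fin n) - e (i : Fin n)) • w (i : Fin n) = 0 := by
    rw [sum_of_support S (fun i => c i - e i) w
      (fun i hi => by simp [hc i hi, he i hi])]
    simp only [sub_smul, Finset.sum_sub_distrib, h, sub_self]
  have hz := Fintype.linearIndependent_iff.mp hind (fun i => c (i : Fin n) - e (i : Fin n)) h0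
  funext i
  by_cases hi : i ∈ S
  · exact sub_eq_zero.mp (hz ⟨i, hi⟩)
  · rw [hc i hi, he i hi]

private lemma coneOf_mono {ι : Type*} [Fintype ι] [DecidableEq ι] {D : ℕ}
    (v : ι → Fin D → ℤ) {S T : Finset ι} (h : S ⊆ T) :
    coneOf v S ⊆ coneOf v T := by
  rintro x ⟨c, hc0, hcs, rfl⟩
  exact ⟨c, hc0, fun i hi => hcs i (fun hmem => hi (h hmem)), rfl⟩

theorem cayley_fan_structure (d n r : ℕ) (vbar : Fin n → Fin d → ℤ)
    (Δ : Set (Fin d → ℝ))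
    (hΔ : Δ = convexHull ℝ (insert 0 (Set.range fun i => fun j => (vbar i j : ℝ))))
    (h0 : (0 : Fin d → ℝ) ∈ interior Δ)
    (hlatt : ∀ z : Fin d → ℤ, ((fun j => (z j : ℝ)) ∈ Δ) ↔ (z = 0 ∨ ∃ i, vbar i = z))
    (hrefl : ∃ Pl : Finset (Fin d → ℤ),
      {y : Fin d → ℝ | ∀ x ∈ Δ, -1 ≤ ∑ j, y j * x j} =
        convexHull ℝ ((fun z : Fin d → ℤ => fun j => (z j : ℝ)) '' Pl))
    (Fb : SimplicialFan (Fin n) d) (hFbv : ∀ i, Fb.v i = vbar i)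
    (hcompb : IsComplete Fb)
    (hcoh : ∃ ℓ, StrictConvexPL Fb.v Fb.maxCones Finset.univ ℓ)
    (y : Fin r → Fin n → ℕ) (hpart : ∀ i, ∑ j, y j i = 1)
    (hconv : ∀ j, ConvexPL Fb.v Fb.maxCones Finset.univ fun i => (y j i : ℚ))
    (hne : ∀ j, ∃ i, y j i = 1)
    (grp : Fin n → Fin r) (hgrp : ∀ i, y (grp i) i = 1)
    (v : Fin (n + r) → Fin (d + r) → ℤ)
    (hvmain : ∀ i : Fin n, ∀ b : Fin (d + r), v (Fin.castAdd r i) b =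
      if h : (b : ℕ) < d then vbar i ⟨b, h⟩
      else if (b : ℕ) = d + grp i then 1 else 0)
    (hvtail : ∀ j : Fin r, ∀ b : Fin (d + r), v (Fin.natAdd n j) b =
      if (b : ℕ) = d + j then 1 else 0) :
    (∀ σ ∈ Fb.maxCones,
      LinearIndependent ℚ fun p : ((σ.map (Fin.castAddEmb r)) ∪
          (Finset.univ.map (Fin.natAddEmb n)) : Finset (Fin (n + r))) =>
        fun b => (v p b : ℚ))
    ∧ ((⋃ σ ∈ Fb.maxCones, coneOf v ((σ.map (Fin.castAddEmb r)) ∪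
          (Finset.univ.map (Fin.natAddEmb n))))
        = coneOf v Finset.univ)
    ∧ (∀ σ ∈ Fb.maxCones, ∀ τ ∈ Fb.maxCones,
        coneOf v ((σ.map (Fin.castAddEmb r)) ∪
            (Finset.univ.map (Fin.natAddEmb n))) ∩
          coneOf v ((τ.map (Fin.castAddEmb r)) ∪
            (Finset.univ.map (Fin.natAddEmb n)))
        = coneOf v (((σ ∩ τ).map (Fin.castAddEmb r)) ∪
            (Finset.univ.map (Fin.natAddEmb n))))
    ∧ (∀ σ ∈ Fb.maxCones,
        (fun x : Fin (d + r) → ℚ => fun b : Fin d => x (Fin.castAdd r b)) ''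
            (coneOf v ((σ.map (Fin.castAddEmb r)) ∪
              (Finset.univ.map (Fin.natAddEmb n))))
          = coneOf Fb.v σ) := by
  classical
  have hveq : vbar = Fb.v := funext fun i => (hFbv i).symm
  subst hveq
  -- basic coordinate facts
  have hyq : ∀ (j : Fin r) (i : Fin n), ((y j i : ℚ)) = if grp i = j then 1 else 0 := by
    intro j i
    by_cases h : grp i = j
    · rw [← h, hgrp i]; simp [h]
    · have h1 : y j i = 0 := by
        have hs := hpart i
        have hg1 : y (grp i) i = 1 := hgrp i
        by_contra hne0
        have h2 : 1 ≤ y j i := Nat.one_le_iff_ne_zero.mpr hne0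
        have h4 := Finset.add_sum_erase Finset.univ (fun j' => y j' i)
          (Finset.mem_univ (grp i))
        have h3 : y j i ≤ ∑ j' ∈ Finset.univ.erase (grp i), y j' i :=
          Finset.single_le_sum (f := fun j' => y j' i) (fun _ _ => Nat.zero_le _)
            (Finset.mem_erase.mpr ⟨fun hh => h hh.symm, Finset.mem_univ j⟩)
        omega
      simp [h1, h]
  have hVcc : ∀ (i : Fin n) (b : Fin d),
      ((v (Fin.castAdd r i) (Fin.castAdd r b) : ℚ)) = ((Fb.v i b : ℚ)) := by
    intro i b
    rw [hvmain i (Fin.castAdd r b)]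
    rw [dif_pos (show ((Fin.castAdd r b : Fin (d + r)) : ℕ) < d by simp [b.isLt])]
    norm_num
  have hVct : ∀ (i : Fin n) (j : Fin r),
      ((v (Fin.castAdd r i) (Fin.natAdd d j) : ℚ)) = if grp i = j then 1 else 0 := by
    intro i j
    rw [hvmain i (Fin.natAdd d j)]
    rw [dif_neg (show ¬ ((Fin.natAdd d j : Fin (d + r)) : ℕ) < d by simp)]
    have : ((Fin.natAdd d j : Fin (d + r)) : ℕ) = d + (j : ℕ) := by simp
    rw [this]
    by_cases h : grp i = j
    · rw [if_pos (by rw [h]), if_pos h]; norm_num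
    · rw [if_neg (by intro hh; exact h (Fin.ext (by omega)).symm), if_neg h]; norm_num
  have hVtc : ∀ (j : Fin r) (b : Fin d),
      ((v (Fin.natAdd n j) (Fin.castAdd r b) : ℚ)) = 0 := by
    intro j b
    rw [hvtail j (Fin.castAdd r b)]
    rw [if_neg (by simp; omega)]
    norm_num
  have hVtt : ∀ (j' j : Fin r),
      ((v (Fin.natAdd n j') (Fin.natAdd d j) : ℚ)) = if j' = j then 1 else 0 := by
    intro j' j
    rw [hvtail j' (Fin.natAdd d j)]
    have : ((Fin.natAdd d j : Fin (d + r)) : ℕ) = d + (j : ℕ) := by simp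
    rw [this]
    by_cases h : j' = j
    · rw [if_pos (by rw [h]), if_pos h]; norm_num
    · rw [if_neg (by intro hh; exact h (Fin.ext (by omega)).symm), if_neg h]; norm_num
  -- sum decompositions
  have hS1 : ∀ (c : Fin (n + r) → ℚ) (b : Fin d),
      (∑ p, c p • fun j => ((v p j : ℚ))) (Fin.castAdd r b) =
        ∑ i, c (Fin.castAdd r i) * ((Fb.v i b : ℚ)) := by
    intro c b
    rw [Finset.sum_apply]
    rw [Fin.sum_univ_add (f := fun p => (c p • fun j => ((v p j : ℚ))) (Fin.castAdd r b))]
    simp only [Pi.smul_apply, smul_eq_mul, hVcc, hVtc, mul_zero, Finset.sum_const_zero,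
      add_zero]
  have hS2 : ∀ (c : Fin (n + r) → ℚ) (j : Fin r),
      (∑ p, c p • fun b => ((v p b : ℚ))) (Fin.natAdd d j) =
        (∑ i, if grp i = j then c (Fin.castAdd r i) else 0) + c (Fin.natAdd n j) := by
    intro c j
    rw [Finset.sum_apply]
    rw [Fin.sum_univ_add (f := fun p => (c p • fun b => ((v p b : ℚ))) (Fin.natAdd d j))]
    simp only [Pi.smul_apply, smul_eq_mul, hVct, hVtt, mul_ite, mul_one, mul_zero]
    congr 1
    simp
  -- membership in the “tilde” index sets
  have hmemT : ∀ (S : Finset (Fin n)) (p : Fin (n + r)),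
      p ∈ (S.map (Fin.castAddEmb r)) ∪ (Finset.univ.map (Fin.natAddEmb n)) ↔
      (∃ i ∈ S, Fin.castAdd r i = p) ∨ (∃ j : Fin r, Fin.natAdd n j = p) := by
    intro S p
    simp [Finset.mem_map, Fin.castAddEmb, Fin.natAddEmb, Fin.castAdd, Function.Embedding.coeFn_mk]
    exact Iff.rfl
  have hcastmem : ∀ (S : Finset (Fin n)) (i : Fin n),
      (Fin.castAdd r i ∈ (S.map (Fin.castAddEmb r)) ∪ (Finset.univ.map (Fin.natAddEmb n)))
        ↔ i ∈ S := by
    intro S i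
    rw [hmemT]
    constructor
    · rintro (⟨i', hi', h⟩ | ⟨j, h⟩)
      · have : i' = i := by
          have hv := congrArg Fin.val h
          simp at hv
          exact Fin.ext hv
        rwa [← this]
      · exfalso
        have hv := congrArg Fin.val h
        simp at hv
        omega
    · intro h; exact Or.inl ⟨i, h, rfl⟩
  have hnatmem : ∀ (S : Finset (Fin n)) (j : Fin r),
      Fin.natAdd n j ∈ (S.map (Fin.castAddEmb r)) ∪ (Finset.univ.map (Fin.natAddEmb n)) := by
    intro S j
    rw [hmemT]
    exact Or.inr ⟨j, rfl⟩
  -- the key membership characterization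
  have memTilde : ∀ (S : Finset (Fin n)) (x : Fin (d + r) → ℚ),
      x ∈ coneOf v ((S.map (Fin.castAddEmb r)) ∪ (Finset.univ.map (Fin.natAddEmb n))) ↔
      ∃ cb : Fin n → ℚ, (∀ i, 0 ≤ cb i) ∧ (∀ i ∉ S, cb i = 0) ∧
        ((fun b => x (Fin.castAdd r b)) = ∑ i, cb i • fun b => ((Fb.v i b : ℚ))) ∧
        (∀ j : Fin r, (∑ i, if grp i = j then cb i else 0) ≤ x (Fin.natAdd d j)) := by
    intro S x
    constructor
    · rintro ⟨c, hc0, hcs, rfl⟩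
      refine ⟨fun i => c (Fin.castAdd r i), fun i => hc0 _, ?_, ?_, ?_⟩
      · intro i hi
        exact hcs _ (fun hmem => hi ((hcastmem S i).mp hmem))
      · funext b
        rw [hS1]
        rw [Finset.sum_apply]
        simp only [Pi.smul_apply, smul_eq_mul]
      · intro j
        rw [hS2]
        exact le_add_of_nonneg_right (hc0 _)
    · rintro ⟨cb, hcb0, hcbs, hx1, hx2⟩
      refine ⟨Fin.addCases cb (fun j => x (Fin.natAdd d j) - ∑ i, if grp i = j then cb i else 0),
        ?_, ?_, ?_⟩
      · intro p
        induction p using Fin.addCases with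
        | left i => simp only [Fin.addCases_left]; exact hcb0 i
        | right j => simp only [Fin.addCases_right]; exact sub_nonneg.mpr (hx2 j)
      · intro p hp
        induction p using Fin.addCases with
        | left i =>
          simp only [Fin.addCases_left]
          exact hcbs i (fun hmem => hp ((hcastmem S i).mpr hmem))
        | right j => exact absurd (hnatmem S j) hp
      · funext b
        induction b using Fin.addCases with
        | left b =>
          rw [hS1]
          simp only [Fin.addCases_left]
          have := congrFun hx1 b
          rw [Finset.sum_apply] at this
          simpa only [Pi.smul_apply, smul_eq_mul] using this
        | right j =>
          rw [hS2]
          simp only [Fin.addCases_left, Fin.addCases_right]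
          ring
  refine ⟨?_, ?_, ?_, ?_⟩
  · -- linear independence
    intro σ hσ
    rw [Fintype.linearIndependent_iff]
    intro g hg p0
    obtain ⟨c, hczero, hgc⟩ :
        ∃ c : Fin (n + r) → ℚ,
          (∀ p ∉ (σ.map (Fin.castAddEmb r)) ∪ (Finset.univ.map (Fin.natAddEmb n)), c p = 0) ∧
          (∀ p : ((σ.map (Fin.castAddEmb r)) ∪ (Finset.univ.map (Fin.natAddEmb n)) :
              Finset (Fin (n + r))), c (p : Fin (n + r)) = g p) :=
      ⟨fun p => if h : p ∈ (σ.map (Fin.castAddEmb r)) ∪ (Finset.univ.map (Fin.natAddEmb n))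
          then g ⟨p, h⟩ else 0,
        fun p hp => dif_neg hp, fun p => dif_pos p.2⟩
    have hsum : ∑ p, c p • (fun b => ((v p b : ℚ))) = 0 := by
      rw [← sum_of_support ((σ.map (Fin.castAddEmb r)) ∪ (Finset.univ.map (Fin.natAddEmb n)))
        c (fun p => fun b => ((v p b : ℚ))) hczero]
      simp only [hgc]
      exact hg
    have h1 : ∀ i : Fin n, c (Fin.castAdd r i) = 0 := by
      have hcsupp : ∀ i ∉ σ, c (Fin.castAdd r i) = 0 := by
        intro i hi
        exact hczero _ (fun hmem => hi ((hcastmem σ i).mp hmem))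
      have hproj : ∑ i, c (Fin.castAdd r i) • (fun b => ((Fb.v i b : ℚ))) =
          ∑ i, (0 : Fin n → ℚ) i • (fun b => ((Fb.v i b : ℚ))) := by
        funext b
        rw [Finset.sum_apply, Finset.sum_apply]
        have h0 := congrFun hsum (Fin.castAdd r b)
        rw [hS1] at h0
        simp only [Pi.smul_apply, smul_eq_mul, Pi.zero_apply, zero_mul,
          Finset.sum_const_zero]
        simpa using h0
      have := indep_unique (fun i => fun b => ((Fb.v i b : ℚ))) σ (Fb.indep σ hσ)
        (fun i => c (Fin.castAdd r i)) 0 hcsupp (fun _ _ => rfl) hproj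
      intro i
      exact congrFun this i
    have h2 : ∀ j : Fin r, c (Fin.natAdd n j) = 0 := by
      intro j
      have h0 := congrFun hsum (Fin.natAdd d j)
      rw [hS2] at h0
      simp only [h1, ite_self, Finset.sum_const_zero, zero_add, Pi.zero_apply] at h0
      exact h0
    have hall : ∀ p, c p = 0 := by
      intro p
      induction p using Fin.addCases with
      | left i => exact h1 i
      | right j => exact h2 j
    rw [← hgc p0]
    exact hall _
  · -- union of cones is everything
    ext x
    simp only [Set.mem_iUnion]
    constructor
    · rintro ⟨σ, hσ, hx⟩
      exact coneOf_mono v (Finset.subset_univ _) hx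
    · rintro ⟨c, hc0, -, rfl⟩
      set x : Fin (d + r) → ℚ := ∑ p, c p • fun b => ((v p b : ℚ)) with hx
      obtain ⟨σ, hσ, hmem⟩ := hcompb (fun b => x (Fin.castAdd r b))
      obtain ⟨cb, hcb0, hcbs, hrep⟩ := hmem
      refine ⟨σ, hσ, (memTilde σ x).mpr ⟨cb, hcb0, hcbs, hrep, ?_⟩⟩
      intro j
      obtain ⟨w, hw1, hw2⟩ := hconv j σ hσ
      have hzrep : (fun b => x (Fin.castAdd r b)) =
          ∑ i, c (Fin.castAdd r i) • fun b => ((Fb.v i b : ℚ)) := by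
        funext b
        rw [Finset.sum_apply]
        simp only [Pi.smul_apply, smul_eq_mul]
        exact hS1 c b
      have key1 : (∑ i, if grp i = j then cb i else 0) =
          w (fun b => x (Fin.castAdd r b)) := by
        rw [hrep, map_sum]
        apply Finset.sum_congr rfl
        intro i _
        rw [map_smul, smul_eq_mul]
        by_cases hi : i ∈ σ
        · rw [hw1 i hi]
          simp only [hyq]
          by_cases h : grp i = j <;> simp [h]
        · rw [hcbs i hi]
          simp
      have key2 : w (fun b => x (Fin.castAdd r b)) ≤
          ∑ i, if grp i = j then c (Fin.castAdd r i) else 0 := by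
        rw [hzrep, map_sum]
        simp only [map_smul, smul_eq_mul]
        refine Finset.sum_le_sum ?_
        intro i _
        have hwle := hw2 i (Finset.mem_univ i)
        simp only [hyq] at hwle
        by_cases h : grp i = j
        · rw [if_pos h] at hwle ⊢
          calc c (Fin.castAdd r i) * w (fun b => ((Fb.v i b : ℚ)))
              ≤ c (Fin.castAdd r i) * 1 := mul_le_mul_of_nonneg_left hwle (hc0 _)
            _ = c (Fin.castAdd r i) := mul_one _
        · rw [if_neg h] at hwle ⊢
          calc c (Fin.castAdd r i) * w (fun b => ((Fb.v i b : ℚ)))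
              ≤ c (Fin.castAdd r i) * 0 := mul_le_mul_of_nonneg_left hwle (hc0 _)
            _ = 0 := mul_zero _
      have key3 : (∑ i, if grp i = j then c (Fin.castAdd r i) else 0) ≤
          x (Fin.natAdd d j) := by
        rw [hx, hS2]
        exact le_add_of_nonneg_right (hc0 _)
      calc (∑ i, if grp i = j then cb i else 0)
          = w (fun b => x (Fin.castAdd r b)) := key1
        _ ≤ ∑ i, if grp i = j then c (Fin.castAdd r i) else 0 := key2
        _ ≤ x (Fin.natAdd d j) := key3
  · -- pairwise intersections
    intro σ hσ τ hτ
    ext x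
    simp only [Set.mem_inter_iff]
    constructor
    · rintro ⟨hx1, hx2⟩
      obtain ⟨cb, hcb0, hcbs, hcrep, hcineq⟩ := (memTilde σ x).mp hx1
      obtain ⟨db, hdb0, hdbs, hdrep, -⟩ := (memTilde τ x).mp hx2
      have hmemi : (fun b => x (Fin.castAdd r b)) ∈ coneOf Fb.v (σ ∩ τ) := by
        rw [← Fb.inter_face σ hσ τ hτ]
        exact ⟨⟨cb, hcb0, hcbs, hcrep⟩, ⟨db, hdb0, hdbs, hdrep⟩⟩
      obtain ⟨eb, heb0, hebs, herep⟩ := hmemi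
      have hce : cb = eb := indep_unique (fun i => fun b => ((Fb.v i b : ℚ))) σ
        (Fb.indep σ hσ) cb eb hcbs
        (fun i hi => hebs i (fun hmem => hi (Finset.mem_of_mem_inter_left hmem)))
        (hcrep.symm.trans herep)
      refine (memTilde (σ ∩ τ) x).mpr ⟨eb, heb0, hebs, herep, ?_⟩
      intro j
      rw [← hce]
      exact hcineq j
    · intro hx
      constructor
      · refine coneOf_mono v ?_ hx
        exact Finset.union_subset_union
          (Finset.map_subset_map.mpr (Finset.inter_subset_left)) (le_refl _)
      · refine coneOf_mono v ?_ hx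
        exact Finset.union_subset_union
          (Finset.map_subset_map.mpr (Finset.inter_subset_right)) (le_refl _)
  · -- projection of maximal cones
    intro σ hσ
    ext z
    simp only [Set.mem_image]
    constructor
    · rintro ⟨x, hx, rfl⟩
      obtain ⟨cb, hcb0, hcbs, hcrep, -⟩ := (memTilde σ x).mp hx
      exact ⟨cb, hcb0, hcbs, hcrep⟩
    · rintro ⟨cb, hcb0, hcbs, hrep⟩
      set cc : Fin (n + r) → ℚ := Fin.addCases cb (fun _ => (0 : ℚ)) with hcc
      have hnn : ∀ p, 0 ≤ cc p := by
        intro p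
        induction p using Fin.addCases with
        | left i => simp [hcc, Fin.addCases_left]; exact hcb0 i
        | right j => simp [hcc, Fin.addCases_right]
      have hsupp : ∀ p ∉ (σ.map (Fin.castAddEmb r)) ∪ (Finset.univ.map (Fin.natAddEmb n)),
          cc p = 0 := by
        intro p hp
        induction p using Fin.addCases with
        | left i =>
          simp only [hcc, Fin.addCases_left]
          exact hcbs i (fun hmem => hp ((hcastmem σ i).mpr hmem))
        | right j => simp [hcc, Fin.addCases_right]
      refine ⟨∑ p, cc p • fun b => ((v p b : ℚ)), ⟨cc, hnn, hsupp, rfl⟩, ?_⟩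
      funext b
      rw [hS1]
      simp only [hcc, Fin.addCases_left]
      rw [hrep, Finset.sum_apply]
      simp only [Pi.smul_apply, smul_eq_mul]
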